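/- Let $0 < |q| < 1$ and $0 < |s| < 1$. For every $m \in \mathbb{Z}_{\ge 0}$ the one-variable interpolation polynomials satisfy $R_m(x;q,s) = G_m(x;q,s) + G_{-m}(x;q,s)$ (with $G_0 := R_0 = 1$ when $m = 0$), where $R_m(x;q,s) = \frac{(sx,sx^{-1};q)_m}{(q^m s^2, q^{-m};q)_m}$, $G_m(x;q,s) = \frac{(qsx, sx^{-1};q)_m}{(q^{1+m}s^2, q^{-m};q)_m}$, and for $m>0$, $G_{-m}(x;q,s) = \frac{q^m s x (qsx;q)_{m-1}(sx^{-1};q)_{m+1}}{(q^m s^2;q)_{m+1}(q^{1-m};q)_{m-1}}$. -/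

import Mathlib

noncomputable section
open Finset

/-- The `q`-shifted factorial `(a;q)_k = (1-a)(1-qa)⋯(1-q^{k-1}a)`. -/
def qPoch (q a : ℂ) (k : ℕ) : ℂ := ∏ i ∈ Finset.range k, (1 - q ^ i * a)

/-- The one-variable symmetric interpolation polynomial
`R_m(x) = (sx;q)_m (sx⁻¹;q)_m / ((q^m s²;q)_m (q^{-m};q)_m)`. -/
def Rone (q s : ℂ) (m : ℕ) (x : ℂ) : ℂ :=
  (qPoch q (s * x) m * qPoch q (s * x⁻¹) m) /
    (qPoch q (q ^ m * s ^ 2) m * qPoch q (q ^ (-(m : ℤ))) m)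

/-- The one-variable nonsymmetric interpolation polynomial of degree `m ≥ 0`:
`G_m(x) = (qsx;q)_m (sx⁻¹;q)_m / ((q^{1+m} s²;q)_m (q^{-m};q)_m)`. -/
def Gone (q s : ℂ) (m : ℕ) (x : ℂ) : ℂ :=
  (qPoch q (q * s * x) m * qPoch q (s * x⁻¹) m) /
    (qPoch q (q ^ (1 + m) * s ^ 2) m * qPoch q (q ^ (-(m : ℤ))) m)

/-- The one-variable nonsymmetric interpolation polynomial of degree `-m`, `m > 0`:
`G_{-m}(x) = q^m s x (qsx;q)_{m-1} (sx⁻¹;q)_{m+1} / ((q^m s²;q)_{m+1} (q^{1-m};q)_{m-1})`. -/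
def GnegOne (q s : ℂ) (m : ℕ) (x : ℂ) : ℂ :=
  (q ^ m * s * x * qPoch q (q * s * x) (m - 1) * qPoch q (s * x⁻¹) (m + 1)) /
    (qPoch q (q ^ m * s ^ 2) (m + 1) * qPoch q (q ^ (1 - (m : ℤ))) (m - 1))

/-- Evaluation of a one-variable Laurent polynomial. -/
lemma qPoch_succ (q a : ℂ) (k : ℕ) :
    qPoch q a (k + 1) = qPoch q a k * (1 - q ^ k * a) := Finset.prod_range_succ _ _

lemma qPoch_succ' (q a : ℂ) (k : ℕ) :
    qPoch q a (k + 1) = (1 - a) * qPoch q (q * a) k := by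
  rw [qPoch, Finset.prod_range_succ', pow_zero, one_mul, mul_comm]
  congr 1
  refine Finset.prod_congr rfl fun i _ => ?_
  rw [pow_succ]; ring

lemma qPoch_ne_zero {q a : ℂ} {k : ℕ} (h : ∀ i < k, q ^ i * a ≠ 1) :
    qPoch q a k ≠ 0 := by
  unfold qPoch
  exact Finset.prod_ne_zero_iff.mpr fun i hi =>
    sub_ne_zero.mpr fun hc => h i (Finset.mem_range.mp hi) hc.symm

lemma qPoch_ne_zero_abs {q a : ℂ} {k : ℕ} (h : ∀ i < k, ‖q ^ i * a‖ < 1) :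
    qPoch q a k ≠ 0 := by
  refine qPoch_ne_zero fun i hi hc => ?_
  have := h i hi
  rw [hc] at this; simp at this


def eval1 (c : ℤ →₀ ℂ) (x : ℂ) : ℂ := c.sum fun j a => a * x ^ j

/-- For all `m ≥ 0`, `R_m = G_m + G_{-m}` (with the identity reading `R_0 = G_0 = 1`
when `m = 0`). -/
theorem stmt10 (q s : ℂ) (hq0 : 0 < ‖q‖) (hq1 : ‖q‖ < 1)
    (hs0 : 0 < ‖s‖) (hs1 : ‖s‖ < 1) :
    (∀ x : ℂ, x ≠ 0 → Rone q s 0 x = Gone q s 0 x) ∧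
    ∀ m : ℕ, 0 < m → ∀ x : ℂ, x ≠ 0 →
      Rone q s m x = Gone q s m x + GnegOne q s m x := by
  constructor
  · intro x _
    simp [Rone, Gone, qPoch]
  · intro m hm x hx
    obtain ⟨n, rfl⟩ := Nat.exists_eq_succ_of_ne_zero hm.ne'
    simp only [Nat.succ_eq_add_one]
    have hq : q ≠ 0 := norm_pos_iff.mp hq0
    have habsq : ∀ k : ℕ, 1 ≤ k → ‖q ^ k * s ^ 2‖ < 1 := by
      intro k hk
      have h1 : ‖q‖ ^ k < 1 := pow_lt_one₀ (norm_nonneg q) hq1 (by omega)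
      have h2 : ‖s‖ ^ 2 < 1 := pow_lt_one₀ (norm_nonneg s) hs1 (by omega)
      have h3 : (0:ℝ) ≤ ‖q‖ ^ k := pow_nonneg (norm_nonneg q) k
      have h4 : (0:ℝ) ≤ ‖s‖ ^ 2 := pow_nonneg (norm_nonneg s) 2
      calc ‖q ^ k * s ^ 2‖ = ‖q‖ ^ k * ‖s‖ ^ 2 := by
            rw [norm_mul, norm_pow, norm_pow]
        _ < 1 := by nlinarith
    have hpow_ne_one : ∀ k : ℕ, 1 ≤ k → q ^ k ≠ 1 := by
      intro k hk hc
      have h1 : ‖q‖ ^ k < 1 := pow_lt_one₀ (norm_nonneg q) hq1 (by omega)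
      rw [← norm_pow, hc] at h1; simp at h1
    -- nonzero denominators
    have hA1 : (1 : ℂ) - q ^ (n+1) * s ^ 2 ≠ 0 :=
      sub_ne_zero.mpr fun hc => by
        have := habsq (n+1) (by omega); rw [← hc] at this; simp at this
    have hA2 : (1 : ℂ) - q ^ (2*n+2) * s ^ 2 ≠ 0 :=
      sub_ne_zero.mpr fun hc => by
        have := habsq (2*n+2) (by omega); rw [← hc] at this; simp at this
    have hA3 : (1 : ℂ) - (q ^ (n+1))⁻¹ ≠ 0 :=
      sub_ne_zero.mpr fun hc => hpow_ne_one (n+1) (by omega) (inv_eq_one.mp hc.symm)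
    have hC : qPoch q (q ^ (n+2) * s ^ 2) n ≠ 0 := by
      refine qPoch_ne_zero_abs fun i _ => ?_
      rw [show q ^ i * (q ^ (n+2) * s ^ 2) = q ^ (i+n+2) * s ^ 2 from by ring]
      exact habsq _ (by omega)
    have hD : qPoch q (q ^ (1 - ((n+1 : ℕ) : ℤ))) n ≠ 0 := by
      refine qPoch_ne_zero fun i hi => ?_
      have key : q ^ i * q ^ (1 - ((n+1 : ℕ) : ℤ)) = (q ^ (n - i))⁻¹ := by
        rw [← zpow_natCast q i, ← zpow_add₀ hq, ← zpow_natCast q (n - i), ← zpow_neg]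
        congr 1
        push_cast [Nat.cast_sub hi.le]
        ring
      rw [key]
      exact fun hc => hpow_ne_one (n - i) (by omega) (inv_eq_one.mp hc)
    -- product rewrites
    have h1 : qPoch q (s * x) (n+1) = (1 - s * x) * qPoch q (q * s * x) n := by
      rw [qPoch_succ', mul_assoc]
    have h2 : qPoch q (q ^ (n+1) * s ^ 2) (n+1)
        = (1 - q ^ (n+1) * s ^ 2) * qPoch q (q ^ (n+2) * s ^ 2) n := by
      rw [qPoch_succ', show q * (q ^ (n+1) * s ^ 2) = q ^ (n+2) * s ^ 2 from by ring]
    have h3 : qPoch q (q ^ (n+2) * s ^ 2) (n+1)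
        = qPoch q (q ^ (n+2) * s ^ 2) n * (1 - q ^ (2*n+2) * s ^ 2) := by
      rw [qPoch_succ, show q ^ n * (q ^ (n+2) * s ^ 2) = q ^ (2*n+2) * s ^ 2 from by ring]
    have h4 : qPoch q (q ^ (n+1) * s ^ 2) (n+1+1)
        = (1 - q ^ (n+1) * s ^ 2) * (qPoch q (q ^ (n+2) * s ^ 2) n * (1 - q ^ (2*n+2) * s ^ 2)) := by
      rw [qPoch_succ', show q * (q ^ (n+1) * s ^ 2) = q ^ (n+2) * s ^ 2 from by ring, h3]
    have h5 : qPoch q (s * x⁻¹) (n+1+1)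
        = qPoch q (s * x⁻¹) (n+1) * (1 - q ^ (n+1) * (s * x⁻¹)) := qPoch_succ _ _ _
    have h6 : qPoch q (q ^ (-((n+1 : ℕ) : ℤ))) (n+1)
        = (1 - (q ^ (n+1))⁻¹) * qPoch q (q ^ (1 - ((n+1 : ℕ) : ℤ))) n := by
      have e2 : q * q ^ (-((n+1 : ℕ) : ℤ)) = q ^ (1 - ((n+1 : ℕ) : ℤ)) := by
        rw [sub_eq_add_neg, zpow_add₀ hq, zpow_one]
      have e1 : q ^ (-((n+1 : ℕ) : ℤ)) = (q ^ (n+1) : ℂ)⁻¹ := by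
        rw [zpow_neg, zpow_natCast]
      rw [qPoch_succ', e2, e1]
    simp only [Rone, Gone, GnegOne, Nat.add_sub_cancel, show 1 + (n+1) = n+2 from by omega]
    have h0 : qPoch q (q * s * x) (n+1)
        = qPoch q (q * s * x) n * (1 - q ^ (n+1) * (s * x)) := by
      rw [qPoch_succ, show q ^ n * (q * s * x) = q ^ (n+1) * (s * x) from by ring]
    rw [h0, h1, h2, h3, h4, h5, h6]
    have hqn : q ^ (n+1) ≠ 0 := pow_ne_zero _ hq
    have hd0 : (1 - q ^ (n+1) * s ^ 2) * qPoch q (q ^ (n+2) * s ^ 2) n *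
        ((1 - (q ^ (n+1))⁻¹) * qPoch q (q ^ (1 - ((n+1 : ℕ) : ℤ))) n) ≠ 0 :=
      mul_ne_zero (mul_ne_zero hA1 hC) (mul_ne_zero hA3 hD)
    have hd1 : qPoch q (q ^ (n+2) * s ^ 2) n * (1 - q ^ (2*n+2) * s ^ 2) *
        ((1 - (q ^ (n+1))⁻¹) * qPoch q (q ^ (1 - ((n+1 : ℕ) : ℤ))) n) ≠ 0 :=
      mul_ne_zero (mul_ne_zero hC hA2) (mul_ne_zero hA3 hD)
    have hd2 : (1 - q ^ (n+1) * s ^ 2) *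
        (qPoch q (q ^ (n+2) * s ^ 2) n * (1 - q ^ (2*n+2) * s ^ 2)) *
        qPoch q (q ^ (1 - ((n+1 : ℕ) : ℤ))) n ≠ 0 :=
      mul_ne_zero (mul_ne_zero hA1 (mul_ne_zero hC hA2)) hD
    rw [div_add_div _ _ hd1 hd2, div_eq_div_iff hd0 (mul_ne_zero hd1 hd2)]
    field_simp
    ring
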